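/- arXiv:2408.04630 — 3 statements merged into one kernel-verified Lean document; each statement's English description precedes it below -/
import Mathlib

section
/- Let k be a field of characteristic 2, R = k[x_{i,j}]/(x_{i,j}²), and n ≥ 2. Then m·I_{n+1} ⊆ I_n, where m is the maximal homogeneous ideal (x_{i,j} : i<j) of R, and I_n, I_{n+1} are the ideals generated by the Plücker elements together with cycle monomials of lengths 3,...,n and 3,...,n+1 respectively. -/
open MvPolynomial

/-- Index type for the variables `x_{i,j}`, `i ≠ j`: unordered pairs of distinct naturals. -/
abbrev V : Type := {s : Sym2 ℕ // ¬ s.IsDiag}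

noncomputable section

variable (k : Type) [Field k]

/-- The variable `x_{i,j}` in the polynomial ring `S = k[x_{i,j} : i < j]`,
with the conventions `x_{i,j} = x_{j,i}` and `x_{i,i} = 0`. -/
def xS (i j : ℕ) : MvPolynomial V k :=
  if h : i = j then 0 else X ⟨s(i, j), by rwa [Sym2.mk_isDiag_iff]⟩

lemma xS_comm (i j : ℕ) : xS k i j = xS k j i := by
  unfold xS
  rcases eq_or_ne i j with h | h
  · subst h; rfl
  · rw [dif_neg h, dif_neg (Ne.symm h)]
    exact congrArg _ (Subtype.ext (Sym2.eq_swap))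

/-- The ideal `m^{[2]}` generated by the squares of all variables. -/
def sqIdealS : Ideal (MvPolynomial V k) :=
  Ideal.span (Set.range fun v : V => (X v : MvPolynomial V k) ^ 2)

/-- The ring `R = k[x_{i,j}]/(x_{i,j}^2)`. -/
abbrev Rr : Type := MvPolynomial V k ⧸ sqIdealS k

/-- The variable `x_{i,j}` as an element of `R`. -/
def x (i j : ℕ) : Rr k := Ideal.Quotient.mk _ (xS k i j)

/-- The Plücker element. -/
def pluck (a b c d : ℕ) : Rr k :=
  x k a b * x k c d + x k a c * x k b d + x k a d * x k b c

/-- The cycle monomial on the vertices `v 0, v 1, ..., v (r-1)` (in `R`). -/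
def cyc {r : ℕ} (v : Fin r → ℕ) : Rr k :=
  ∏ t : Fin r, x k (v t) (v ⟨(t.val + 1) % r, Nat.mod_lt _ (Nat.lt_of_le_of_lt (Nat.zero_le _) t.2)⟩)

/-- The standard `n`-cycle monomial `w_n = x_{1,2} x_{2,3} ⋯ x_{n,1}`. -/
def w (n : ℕ) : Rr k := cyc k (fun t : Fin n => (t : ℕ) + 1)

/-- The ideal `I_n`, generated by the Plücker elements and the cycle monomials
of lengths `3, ..., n`. -/
def In (n : ℕ) : Ideal (Rr k) :=
  Ideal.span
    ({p | ∃ a b c d : ℕ, a ≠ b ∧ a ≠ c ∧ a ≠ d ∧ b ≠ c ∧ b ≠ d ∧ c ≠ d ∧ p = pluck k a b c d} ∪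
     {p | ∃ r : ℕ, 3 ≤ r ∧ r ≤ n ∧ ∃ v : Fin r → ℕ, Function.Injective v ∧ p = cyc k v})

/-- The `i`-th column `g(e_i)` of an infinite matrix `g`. -/
def col (g : (ℕ →₀ k) →ₗ[k] (ℕ →₀ k)) (i : ℕ) : ℕ →₀ k := g (Finsupp.single i 1)

/-- The image of the variable `x_{i,j} = e_i ∧ e_j` under `g ∈ GL`, in characteristic two:
`Σ_{a,b} g_{a,i} g_{b,j} x_{a,b}` (as element of `S`). -/
def glXS (g : (ℕ →₀ k) →ₗ[k] (ℕ →₀ k)) (i j : ℕ) : MvPolynomial V k :=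
  ∑ a ∈ (col k g i).support, ∑ b ∈ (col k g j).support,
    (col k g i a * col k g j b) • xS k a b

lemma glXS_comm (g : (ℕ →₀ k) →ₗ[k] (ℕ →₀ k)) (i j : ℕ) :
    glXS k g i j = glXS k g j i := by
  unfold glXS
  rw [Finset.sum_comm]
  refine Finset.sum_congr rfl fun b _ => Finset.sum_congr rfl fun a _ => ?_
  rw [mul_comm, xS_comm]

/-- The algebra endomorphism of `S` induced by `g ∈ GL` (valid in characteristic two). -/
def glS (g : (ℕ →₀ k) →ₗ[k] (ℕ →₀ k)) : MvPolynomial V k →ₐ[k] MvPolynomial V k :=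
  aeval (fun v : V => Sym2.lift ⟨fun i j => glXS k g i j, fun i j => glXS_comm k g i j⟩ v.1)

lemma xS_sq_mem (a b : ℕ) : (xS k a b) ^ 2 ∈ sqIdealS k := by
  unfold xS
  split
  · simp
  · exact Ideal.subset_span ⟨_, rfl⟩

lemma glXS_sq_mem [CharP k 2] (g : (ℕ →₀ k) →ₗ[k] (ℕ →₀ k)) (i j : ℕ) :
    (glXS k g i j) ^ 2 ∈ sqIdealS k := by
  haveI : CharP (MvPolynomial V k) 2 := inferInstance
  haveI : Fact (Nat.Prime 2) := ⟨Nat.prime_two⟩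
  unfold glXS
  rw [sum_pow_char]
  refine Ideal.sum_mem _ fun a _ => ?_
  rw [sum_pow_char]
  refine Ideal.sum_mem _ fun b _ => ?_
  rw [smul_pow, Algebra.smul_def]
  exact Ideal.mul_mem_left _ _ (xS_sq_mem k a b)

lemma glS_maps_sq [CharP k 2] (g : (ℕ →₀ k) →ₗ[k] (ℕ →₀ k)) :
    ∀ p ∈ sqIdealS k, glS k g p ∈ sqIdealS k := by
  intro p hp
  have : Ideal.map (glS k g).toRingHom (sqIdealS k) ≤ sqIdealS k := by
    rw [Ideal.map_le_iff_le_comap, sqIdealS, Ideal.span_le]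
    rintro q ⟨v, rfl⟩
    simp only [SetLike.mem_coe, Ideal.mem_comap, AlgHom.toRingHom_eq_coe, RingHom.coe_coe,
      map_pow]
    obtain ⟨s, hs⟩ := v
    induction s using Sym2.ind with
    | _ i j =>
      show (glS k g (X ⟨s(i,j), hs⟩)) ^ 2 ∈ sqIdealS k
      rw [glS, aeval_X]
      simpa using glXS_sq_mem k g i j
  exact this (Ideal.mem_map_of_mem _ hp)

/-- The algebra endomorphism of `R = S/(x_{i,j}^2)` induced by `g ∈ GL`
(in characteristic two the ideal of squares is preserved). -/
def glR [CharP k 2] (g : (ℕ →₀ k) →ₗ[k] (ℕ →₀ k)) : Rr k →ₐ[k] Rr k :=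
  Ideal.Quotient.liftₐ (sqIdealS k) ((Ideal.Quotient.mkₐ k (sqIdealS k)).comp (glS k g))
    (fun p hp => by
      simp only [AlgHom.comp_apply, Ideal.Quotient.mkₐ_eq_mk, Ideal.Quotient.eq_zero_iff_mem]
      exact glS_maps_sq k g p hp)

/-- `g ∈ GL(k^∞)`: a linear automorphism of `k^∞` fixing all but finitely
many of the basis vectors. -/
def IsGL (g : (ℕ →₀ k) ≃ₗ[k] (ℕ →₀ k)) : Prop :=
  {i : ℕ | g (Finsupp.single i 1) ≠ Finsupp.single i 1}.Finite

/-- A `GL`-stable ideal of `R`. -/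
def GLStable [CharP k 2] (J : Ideal (Rr k)) : Prop :=
  ∀ g : (ℕ →₀ k) ≃ₗ[k] (ℕ →₀ k), IsGL k g →
    Ideal.map (glR k g.toLinearMap) J ≤ J

/-- The `GL`-stable ideal of `R` generated by an element `f`:
the span of the `GL`-orbit of `f`. -/
def glIdeal [CharP k 2] (f : Rr k) : Ideal (Rr k) :=
  Ideal.span {p | ∃ g : (ℕ →₀ k) ≃ₗ[k] (ℕ →₀ k), IsGL k g ∧ p = glR k g.toLinearMap f}

/-- The maximal homogeneous ideal of `R`, generated by all the variables. -/
def mIdeal : Ideal (Rr k) := Ideal.span (Set.range fun v : V => Ideal.Quotient.mk _ (X v))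


set_option synthInstance.maxHeartbeats 1000000
set_option maxHeartbeats 1000000
set_option linter.unusedSectionVars false
section
variable [CharP k 2]

lemma two_zero : (2 : Rr k) = 0 := by
  have h1 : ((2:ℕ) : Rr k) = Ideal.Quotient.mk (sqIdealS k) ((2:ℕ) : MvPolynomial V k) := by
    rw [map_natCast]
  have h2 : ((2:ℕ) : MvPolynomial V k) = 0 := by
    haveI : CharP (MvPolynomial V k) 2 := inferInstance
    exact CharP.cast_eq_zero _ 2
  have : ((2:ℕ) : Rr k) = 0 := by rw [h1, h2, map_zero]
  simpa using this

lemma add_self_zero (a : Rr k) : a + a = 0 := by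
  rw [← two_mul, two_zero, zero_mul]

lemma rneg (a : Rr k) : -a = a :=
  neg_eq_of_add_eq_zero_left (add_self_zero k a)

lemma x_comm' (i j : ℕ) : x k i j = x k j i := by
  unfold x; rw [xS_comm]

lemma x_sq (i j : ℕ) : x k i j * x k i j = 0 := by
  unfold x
  rw [← map_mul, ← pow_two, Ideal.Quotient.eq_zero_iff_mem]
  exact xS_sq_mem k i j

lemma pluck_mem (n : ℕ) {a b c d : ℕ} (hab : a ≠ b) (hac : a ≠ c) (had : a ≠ d)
    (hbc : b ≠ c) (hbd : b ≠ d) (hcd : c ≠ d) : pluck k a b c d ∈ In k n :=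
  Ideal.subset_span (Or.inl ⟨a, b, c, d, hab, hac, had, hbc, hbd, hcd, rfl⟩)

lemma eq_of_add_mem {n : ℕ} {a b : Rr k} (h : a + b ∈ In k n) :
    Ideal.Quotient.mk (In k n) a = Ideal.Quotient.mk (In k n) b := by
  rw [Ideal.Quotient.eq, sub_eq_add_neg, rneg]
  exact h

/-- The path monomial along a list of vertices. -/
def pathL : List ℕ → Rr k
  | [] => 1
  | [_] => 1
  | a :: b :: t => x k a b * pathL (b :: t)

@[simp] lemma pathL_nil : pathL k [] = 1 := rfl
@[simp] lemma pathL_single (a : ℕ) : pathL k [a] = 1 := rfl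
@[simp] lemma pathL_cons_cons (a b : ℕ) (t : List ℕ) :
    pathL k (a :: b :: t) = x k a b * pathL k (b :: t) := rfl

lemma pathL_append : ∀ (l₁ : List ℕ) (a : ℕ) (l₂ : List ℕ),
    pathL k (l₁ ++ a :: l₂) = pathL k (l₁ ++ [a]) * pathL k (a :: l₂)
  | [], a, l₂ => by simp
  | [b], a, l₂ => by simp [mul_assoc]
  | b :: c :: t, a, l₂ => by
    have ih := pathL_append (c :: t) a l₂
    simp only [List.cons_append, pathL_cons_cons] at ih ⊢
    rw [ih, mul_assoc]

lemma pathL_snoc2 (l : List ℕ) (c d : ℕ) :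
    pathL k (l ++ [c, d]) = pathL k (l ++ [c]) * x k c d := by
  have := pathL_append k l c [d]
  simpa [mul_comm] using this

lemma pathL_reverse : ∀ l : List ℕ, pathL k l.reverse = pathL k l
  | [] => rfl
  | [a] => rfl
  | a :: b :: t => by
    have ih := pathL_reverse (b :: t)
    have h1 : (a :: b :: t).reverse = (b :: t).reverse ++ [a] := by simp
    have h2 : (b :: t).reverse = t.reverse ++ [b] := by simp
    rw [h1, h2, List.append_assoc]
    show pathL k (t.reverse ++ [b, a]) = _
    rw [pathL_snoc2, ← h2, ih, pathL_cons_cons, x_comm' k b a, mul_comm]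
lemma pathL_range (u : ℕ → ℕ) : ∀ m : ℕ,
    pathL k (List.map u (List.range (m+1))) = ∏ t ∈ Finset.range m, x k (u t) (u (t+1))
  | 0 => by
    rw [show List.range 1 = [0] from rfl]
    simp
  | (m+1) => by
    have ih := pathL_range u m
    have h1 : List.map u (List.range (m+1+1)) = List.map u (List.range (m+1)) ++ [u (m+1)] := by
      rw [List.range_succ]; simp
    have h2 : List.map u (List.range (m+1)) = List.map u (List.range m) ++ [u m] := by
      rw [List.range_succ]; simp
    rw [h1]
    nth_rewrite 1 [h2]
    rw [List.append_assoc]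
    show pathL k (List.map u (List.range m) ++ [u m, u (m+1)]) = _
    rw [pathL_snoc2, ← h2, ih, Finset.prod_range_succ]

lemma cyc_eq_pathL {r : ℕ} (hr : 0 < r) (v : Fin r → ℕ) :
    cyc k v = pathL k (List.ofFn v ++ [v ⟨0, hr⟩]) := by
  set u : ℕ → ℕ := fun t => v ⟨t % r, Nat.mod_lt _ hr⟩ with hu
  have step1 : cyc k v = ∏ t ∈ Finset.range r, x k (u t) (u (t+1)) := by
    rw [← Fin.prod_univ_eq_prod_range]
    unfold cyc
    refine Finset.prod_congr rfl fun t _ => ?_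
    congr 1
    · congr 1
      exact (Fin.ext (Nat.mod_eq_of_lt t.2)).symm
  have step2 : List.map u (List.range (r+1)) = List.ofFn v ++ [v ⟨0, hr⟩] := by
    apply List.ext_getElem
    · simp
    · intro t h1 h2
      simp only [List.getElem_map, List.getElem_range]
      rcases Nat.lt_or_ge t r with ht | ht
      · rw [List.getElem_append_left (by simpa using ht)]
        simp only [List.getElem_ofFn, hu]
        congr 1
        exact Fin.ext (Nat.mod_eq_of_lt ht)
      · have ht' : t = r := by
          simp only [List.length_map, List.length_range] at h1; omega
        subst ht'
        rw [List.getElem_append_right (by simp)]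
        simp only [List.length_ofFn, Nat.sub_self, List.getElem_cons_zero, hu]
        congr 1
        exact Fin.ext (by simpa using Nat.mod_self r)
  obtain ⟨m, rfl⟩ : ∃ m, r = m + 1 := ⟨r - 1, by omega⟩
  rw [step1, ← pathL_range, step2]

/-- Closed cycles on nodup lists of admissible length are in `In`. -/
lemma closed_mem (n : ℕ) (a : ℕ) (l : List ℕ) (hnd : (a :: l).Nodup)
    (h3 : 3 ≤ l.length + 1) (hn : l.length + 1 ≤ n) :
    pathL k (a :: (l ++ [a])) ∈ In k n := by
  set L : List ℕ := a :: l with hL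
  have hpos : 0 < L.length := by simp [hL]
  set v : Fin L.length → ℕ := L.get with hv
  have hinj : Function.Injective v := List.nodup_iff_injective_get.mp hnd
  have hmem : cyc k v ∈ In k n :=
    Ideal.subset_span (Or.inr ⟨L.length, by simp [hL]; omega, by simp [hL]; omega,
      v, hinj, rfl⟩)
  have hofn : List.ofFn v = L := List.ofFn_get L
  have h0 : v ⟨0, hpos⟩ = a := by simp [hv, hL]
  rwa [cyc_eq_pathL k hpos v, hofn, h0, hL, List.cons_append] at hmem

lemma rot1 (c b : ℕ) (l : List ℕ) :
    pathL k (c :: b :: (l ++ [c])) = pathL k (b :: ((l ++ [c]) ++ [b])) := by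
  rw [pathL_cons_cons]
  have h : (l ++ [c]) ++ [b] = l ++ [c, b] := by simp
  rw [h, show b :: (l ++ [c, b]) = (b :: l) ++ [c, b] from rfl, pathL_snoc2]
  rw [show (b :: l) ++ [c] = b :: (l ++ [c]) from rfl, mul_comm]

lemma rot_closed : ∀ (L₁ : List ℕ) (c a : ℕ) (L₂ : List ℕ),
    pathL k (c :: ((L₁ ++ a :: L₂) ++ [c])) = pathL k (a :: ((L₂ ++ c :: L₁) ++ [a]))
  | [], c, a, L₂ => by
    have h := rot1 k c a L₂
    simpa using h
  | p :: T, c, a, L₂ => by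
    have h1 := rot1 k c p (T ++ a :: L₂)
    have h2 : (T ++ a :: L₂) ++ [c] = T ++ a :: (L₂ ++ [c]) := by simp
    have ih := rot_closed T p a (L₂ ++ [c])
    have h3 : (L₂ ++ [c]) ++ p :: T = L₂ ++ c :: p :: T := by simp
    rw [show ((p :: T) ++ a :: L₂) ++ [c] = p :: ((T ++ a :: L₂) ++ [c]) from by simp,
      h1, h2, ih, h3]
lemma swap_head (n : ℕ) {a p q c : ℕ} (hap : a ≠ p) (haq : a ≠ q) (hac : a ≠ c)
    (hpq : p ≠ q) (hpc : p ≠ c) (hqc : q ≠ c) (Z : Rr k) :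
    Ideal.Quotient.mk (In k n) (x k a p * (x k p q * (x k q c * Z))) =
    Ideal.Quotient.mk (In k n) (x k a q * (x k q p * (x k p c * Z))) := by
  apply eq_of_add_mem
  have hsq : x k p q * x k p q = 0 := x_sq k p q
  have hid : x k a p * (x k p q * (x k q c * Z)) + x k a q * (x k q p * (x k p c * Z)) =
      pluck k a p q c * (x k p q * Z) := by
    rw [pluck, x_comm' k q p]
    linear_combination (x k a c * Z) * hsq - (x k p q ^ 2 * Z * x k a c) * two_zero k
  rw [hid]
  exact Ideal.mul_mem_right _ _ (pluck_mem k n hap haq hac hpq hpc hqc)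

lemma swapH_path (n : ℕ) {a p q c : ℕ} (hap : a ≠ p) (haq : a ≠ q) (hac : a ≠ c)
    (hpq : p ≠ q) (hpc : p ≠ c) (hqc : q ≠ c) (tl : List ℕ) :
    Ideal.Quotient.mk (In k n) (pathL k (a :: p :: q :: c :: tl)) =
    Ideal.Quotient.mk (In k n) (pathL k (a :: q :: p :: c :: tl)) := by
  simp only [pathL_cons_cons]
  exact swap_head k n hap haq hac hpq hpc hqc (pathL k (c :: tl))

lemma move (n : ℕ) (S : List ℕ) : ∀ (c q d : ℕ), c ∉ (q :: (S ++ [d])) → q ∉ S ++ [d] →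
    (S ++ [d]).Nodup →
    Ideal.Quotient.mk (In k n) (pathL k (c :: q :: (S ++ [d]))) =
    Ideal.Quotient.mk (In k n) (pathL k (c :: (S ++ [q, d]))) := by
  induction S with
  | nil => intro c q d _ _ _; rfl
  | cons s S' ih =>
    intro c q d hc hq hS
    simp only [List.cons_append] at hc hq hS ⊢
    rw [List.nodup_cons] at hS
    obtain ⟨hst', hS'⟩ := hS
    obtain ⟨t, tl, htl⟩ : ∃ t tl, S' ++ [d] = t :: tl := by
      cases S' <;> exact ⟨_, _, rfl⟩
    have ht_mem : t ∈ S' ++ [d] := htl ▸ (List.mem_cons_self : t ∈ t :: tl)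
    have hs_mem : s ∈ s :: (S' ++ [d]) := List.mem_cons_self
    have hcq : c ≠ q := fun h => hc (h ▸ List.mem_cons_self)
    have hcs : c ≠ s := fun h => hc (List.mem_cons_of_mem _ (h ▸ hs_mem))
    have hct : c ≠ t := fun h =>
      hc (List.mem_cons_of_mem _ (List.mem_cons_of_mem _ (h ▸ ht_mem)))
    have hqs : q ≠ s := fun h => hq (h ▸ hs_mem)
    have hqt : q ≠ t := fun h => hq (List.mem_cons_of_mem _ (h ▸ ht_mem))
    have hstne : s ≠ t := fun h => hst' (h ▸ ht_mem)
    have step1 : Ideal.Quotient.mk (In k n) (pathL k (c :: q :: s :: (S' ++ [d]))) =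
        Ideal.Quotient.mk (In k n) (pathL k (c :: s :: q :: (S' ++ [d]))) := by
      rw [htl]
      exact swapH_path k n hcq hcs hct hqs hqt hstne tl
    have hq' : q ∉ S' ++ [d] := fun h => hq (List.mem_cons_of_mem _ h)
    have hs' : s ∉ q :: (S' ++ [d]) := by
      intro h
      rcases List.mem_cons.mp h with h | h
      · exact hqs h.symm
      · exact hst' h
    have ihs := ih s q d hs' hq' hS'
    obtain ⟨t', tl', htl'⟩ : ∃ t' tl', S' ++ [q, d] = t' :: tl' := by
      cases S' <;> exact ⟨_, _, rfl⟩
    calc Ideal.Quotient.mk (In k n) (pathL k (c :: q :: s :: (S' ++ [d])))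
        = Ideal.Quotient.mk (In k n) (pathL k (c :: s :: q :: (S' ++ [d]))) := step1
      _ = Ideal.Quotient.mk (In k n) (x k c s) *
          Ideal.Quotient.mk (In k n) (pathL k (s :: q :: (S' ++ [d]))) := by
          rw [← map_mul]
          rfl
      _ = Ideal.Quotient.mk (In k n) (x k c s) *
          Ideal.Quotient.mk (In k n) (pathL k (s :: (S' ++ [q, d]))) := by rw [ihs]
      _ = Ideal.Quotient.mk (In k n) (pathL k (c :: s :: (S' ++ [q, d]))) := by
          rw [← map_mul, pathL_cons_cons]

lemma revint (n : ℕ) (Q : List ℕ) : ∀ (c d : ℕ), c ∉ Q ++ [d] → (Q ++ [d]).Nodup →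
    Ideal.Quotient.mk (In k n) (pathL k (c :: (Q ++ [d]))) =
    Ideal.Quotient.mk (In k n) (pathL k (c :: (Q.reverse ++ [d]))) := by
  induction Q with
  | nil => intro c d _ _; rfl
  | cons q Q' ih =>
    intro c d hc hQ
    simp only [List.cons_append] at hc hQ ⊢
    rw [List.nodup_cons] at hQ
    obtain ⟨hq', hQ'⟩ := hQ
    have hcq : c ≠ q := fun h => (h ▸ hc) List.mem_cons_self
    have hc' : c ∉ Q' ++ [d] := fun h => hc (List.mem_cons_of_mem _ h)
    have ihq := ih q d hq' hQ'
    have step3 : Ideal.Quotient.mk (In k n) (pathL k (c :: q :: (Q' ++ [d]))) =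
        Ideal.Quotient.mk (In k n) (pathL k (c :: q :: (Q'.reverse ++ [d]))) := by
      rw [pathL_cons_cons, pathL_cons_cons, map_mul, map_mul, ihq]
    have hcmove : c ∉ q :: (Q'.reverse ++ [d]) := by
      intro h
      rcases List.mem_cons.mp h with h | h
      · exact hcq h
      · rcases List.mem_append.mp h with h | h
        · exact hc' (List.mem_append_left _ (List.mem_reverse.mp h))
        · exact hc' (List.mem_append_right _ h)
    have hqmove : q ∉ Q'.reverse ++ [d] := by
      intro h
      rcases List.mem_append.mp h with h | h
      · exact hq' (List.mem_append_left _ (List.mem_reverse.mp h))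
      · exact hq' (List.mem_append_right _ h)
    have hQmove : (Q'.reverse ++ [d]).Nodup := by
      rw [List.nodup_append] at hQ' ⊢
      exact ⟨List.nodup_reverse.mpr hQ'.1, hQ'.2.1, fun t ht => hQ'.2.2 t (List.mem_reverse.mp ht)⟩
    have step4 := move k n Q'.reverse c q d hcmove hqmove hQmove
    have h5 : Q'.reverse ++ [q, d] = (Q'.reverse ++ [q]) ++ [d] := by simp
    rw [step3, step4, h5]
    simp [List.reverse_cons]

lemma endswap (n : ℕ) (Q : List ℕ) (a b : ℕ) (ha : a ∉ Q) (hb : b ∉ Q) (hab : a ≠ b)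
    (hQ : Q.Nodup) :
    Ideal.Quotient.mk (In k n) (pathL k (a :: (Q ++ [b]))) =
    Ideal.Quotient.mk (In k n) (pathL k (b :: (Q ++ [a]))) := by
  have hndQb : (Q ++ [b]).Nodup := by
    rw [List.nodup_append]
    exact ⟨hQ, List.nodup_singleton b, fun t ht b' hb' htb =>
      hb (by rw [← List.mem_singleton.mp hb', ← htb]; exact ht)⟩
  have hndQrb : (Q.reverse ++ [b]).Nodup := by
    rw [List.nodup_append]
    exact ⟨List.nodup_reverse.mpr hQ, List.nodup_singleton b, fun t ht b' hb' htb =>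
      hb (by rw [← List.mem_singleton.mp hb', ← htb]; exact List.mem_reverse.mp ht)⟩
  have h1 : pathL k (b :: (Q ++ [a])) = pathL k (a :: (Q.reverse ++ [b])) := by
    rw [← pathL_reverse k (b :: (Q ++ [a]))]
    congr 1
    simp
  have haQb : a ∉ Q ++ [b] := by
    intro h
    rcases List.mem_append.mp h with h | h
    · exact ha h
    · exact hab (List.mem_singleton.mp h)
  have haQrb : a ∉ Q.reverse ++ [b] := by
    intro h
    rcases List.mem_append.mp h with h | h
    · exact ha (List.mem_reverse.mp h)
    · exact hab (List.mem_singleton.mp h)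
  rw [h1, revint k n Q.reverse a b haQrb hndQrb, List.reverse_reverse]
lemma cyc_rotate (n : ℕ) (v : Fin (n+1) → ℕ) (e : ℕ) (he : e ∈ List.ofFn v) :
    ∃ K : List ℕ, cyc k v = pathL k (e :: (K ++ [e])) ∧
      (e :: K).Perm (List.ofFn v) := by
  have hr : 0 < n + 1 := Nat.succ_pos n
  have hcyc := cyc_eq_pathL k hr v
  obtain ⟨L₁, L₂, hL⟩ := List.append_of_mem he
  have hofn : List.ofFn v = v 0 :: List.ofFn (fun i : Fin n => v i.succ) := List.ofFn_succ
  have h00 : v ⟨0, hr⟩ = v 0 := by congr 1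
  cases L₁ with
  | nil =>
    have hv0 : v 0 = e := by
      have h1 : v 0 :: List.ofFn (fun i : Fin n => v i.succ) = e :: L₂ := by
        rw [← hofn, hL]; simp
      exact (List.cons.injEq _ _ _ _ ▸ h1 : _ ∧ _).1
    refine ⟨L₂, ?_, ?_⟩
    · rw [hcyc, h00, hv0, hL]
      simp only [List.nil_append, List.cons_append]
    · rw [hL]; simp
  | cons c T =>
    have hv0 : v 0 = c := by
      have h1 : v 0 :: List.ofFn (fun i : Fin n => v i.succ) = c :: (T ++ e :: L₂) := by
        rw [← hofn, hL]; simp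
      exact (List.cons.injEq _ _ _ _ ▸ h1 : _ ∧ _).1
    refine ⟨L₂ ++ c :: T, ?_, ?_⟩
    · rw [hcyc, h00, hv0, hL]
      have hrot := rot_closed k T c e L₂
      rw [show (((c :: T) ++ e :: L₂) ++ [c]) = c :: ((T ++ e :: L₂) ++ [c]) from by simp]
      rw [hrot]
    · rw [hL]
      show (e :: (L₂ ++ c :: T)).Perm (c :: (T ++ e :: L₂))
      exact ((List.perm_middle).cons e).trans
        ((List.Perm.swap c e _).trans
          ((((List.perm_append_comm).cons e).cons c).trans
            ((List.perm_middle.symm).cons c)))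
lemma case_both (n : ℕ) (hn : 2 ≤ n) (i j : ℕ) (hij : i ≠ j) (v : Fin (n+1) → ℕ)
    (hv : Function.Injective v) (hi : i ∈ List.ofFn v) (hj : j ∈ List.ofFn v) :
    x k i j * cyc k v ∈ In k n := by
  obtain ⟨K, hceq, hperm⟩ := cyc_rotate k n v i hi
  have hnd : (i :: K).Nodup := hperm.nodup_iff.mpr (List.nodup_ofFn.mpr hv)
  have hKlen : K.length = n := by
    have h := hperm.length_eq
    simp only [List.length_cons, List.length_ofFn] at h
    omega
  have hjK : j ∈ K := by
    have h : j ∈ i :: K := hperm.mem_iff.mpr hj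
    rcases List.mem_cons.mp h with h | h
    · exact absurd h.symm hij
    · exact h
  obtain ⟨K₁, K₂, hK⟩ := List.append_of_mem hjK
  subst hK
  cases K₁ with
  | nil =>
    rw [show (i :: (([] ++ j :: K₂) ++ [i])) = (i :: j :: (K₂ ++ [i])) from by simp] at hceq
    have hxx : x k i j * cyc k v = (x k i j * x k i j) * pathL k (j :: (K₂ ++ [i])) := by
      rw [hceq, pathL_cons_cons]; ring
    rw [hxx, x_sq, zero_mul]
    exact zero_mem _
  | cons a K₁' =>
    cases K₂ with
    | nil =>
      rw [show (i :: (((a :: K₁') ++ j :: []) ++ [i])) = ((i :: a :: K₁') ++ [j, i])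
        from by simp, pathL_snoc2] at hceq
      have hxx : x k i j * cyc k v =
          pathL k ((i :: a :: K₁') ++ [j]) * (x k i j * x k i j) := by
        rw [hceq, x_comm' k j i]; ring
      rw [hxx, x_sq, mul_zero]
      exact zero_mem _
    | cons b K₂' =>
      rw [show (i :: (((a :: K₁') ++ j :: (b :: K₂')) ++ [i]))
          = ((i :: a :: K₁') ++ j :: (b :: K₂' ++ [i])) from by simp,
        pathL_append] at hceq
      have hxx : x k i j * cyc k v =
          (x k j i * pathL k ((i :: a :: K₁') ++ [j])) * pathL k (j :: (b :: K₂' ++ [i])) := by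
        rw [hceq, x_comm' k i j]; ring
      rw [hxx]
      apply Ideal.mul_mem_right
      have hcl : x k j i * pathL k ((i :: a :: K₁') ++ [j]) =
          pathL k (j :: ((i :: a :: K₁') ++ [j])) := rfl
      rw [hcl]
      apply closed_mem
      · -- (j :: i :: a :: K₁').Nodup
        have hsub : (i :: a :: K₁' ++ [j]).Sublist (i :: a :: K₁' ++ j :: b :: K₂') := by
          apply List.Sublist.append_left
          exact (List.nil_sublist _).cons₂ j
        have hnds : (i :: a :: K₁' ++ [j]).Nodup := List.Nodup.sublist hsub hnd
        exact (List.perm_append_singleton j _).nodup_iff.mp hnds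
      · simp
      · have : (a :: K₁' ++ j :: b :: K₂').length = n := hKlen
        simp only [List.length_cons, List.length_append] at this ⊢
        omega

lemma case_onein (n : ℕ) (hn : 2 ≤ n) (i j : ℕ) (hij : i ≠ j) (v : Fin (n+1) → ℕ)
    (hv : Function.Injective v) (hi : i ∉ List.ofFn v) (hj : j ∈ List.ofFn v) :
    x k i j * cyc k v ∈ In k n := by
  obtain ⟨K, hceq, hperm⟩ := cyc_rotate k n v j hj
  have hnd : (j :: K).Nodup := hperm.nodup_iff.mpr (List.nodup_ofFn.mpr hv)
  have hKlen : K.length = n := by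
    have h := hperm.length_eq
    simp only [List.length_cons, List.length_ofFn] at h
    omega
  obtain ⟨p, s, T, hK⟩ : ∃ p s T, K = p :: s :: T := by
    cases K with
    | nil => simp at hKlen; omega
    | cons p K' =>
      cases K' with
      | nil => simp at hKlen; omega
      | cons s T => exact ⟨p, s, T, rfl⟩
  subst hK
  have hpmem : p ∈ List.ofFn v := hperm.mem_iff.mp (by simp)
  have hsmem : s ∈ List.ofFn v := hperm.mem_iff.mp (by simp)
  have hip : i ≠ p := fun h => hi (h ▸ hpmem)
  have his : i ≠ s := fun h => hi (h ▸ hsmem)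
  have hnd' := hnd
  simp only [List.nodup_cons, List.mem_cons, not_or] at hnd'
  have hjp : j ≠ p := hnd'.1.1
  have hjs : j ≠ s := hnd'.1.2.1
  have hps : p ≠ s := hnd'.2.1.1
  have hceq2 : cyc k v = x k j p * (x k p s * pathL k (s :: (T ++ [j]))) := by
    rw [hceq]; rfl
  have hsq : x k j p * x k j p = 0 := x_sq k j p
  set Z := pathL k (s :: (T ++ [j])) with hZ
  have hid : x k i j * cyc k v = pluck k i j p s * (x k j p * Z) +
      (x k i p * x k j p) * (x k j s * Z) := by
    rw [hceq2, pluck]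
    linear_combination (-(x k i s * Z)) * hsq - (x k i p * x k j s * x k j p * Z) * two_zero k
  rw [hid]
  refine add_mem (Ideal.mul_mem_right _ _ (pluck_mem k n hij hip his hjp hjs hps)) ?_
  cases T with
  | nil =>
    have hz : x k j s * Z = 0 := by
      rw [hZ]
      show x k j s * (x k s j * 1) = 0
      rw [x_comm' k s j, mul_one]
      exact x_sq k j s
    rw [hz, mul_zero]
    exact zero_mem _
  | cons t T' =>
    have hcl : x k j s * Z = pathL k (j :: ((s :: t :: T') ++ [j])) := by rw [hZ]; rfl
    rw [hcl]
    apply Ideal.mul_mem_left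
    apply closed_mem
    · have hsub : (j :: s :: t :: T').Sublist (j :: p :: s :: t :: T') :=
        (List.sublist_cons_self p (s :: t :: T')).cons₂ j
      exact List.Nodup.sublist hsub hnd
    · simp
    · have : (p :: s :: t :: T').length = n := hKlen
      simp only [List.length_cons] at this ⊢
      omega

lemma case_fresh (n : ℕ) (hn : 2 ≤ n) (i j : ℕ) (hij : i ≠ j) (v : Fin (n+1) → ℕ)
    (hv : Function.Injective v) (hi : i ∉ List.ofFn v) (hj : j ∉ List.ofFn v) :
    x k i j * cyc k v ∈ In k n := by
  have hr : 0 < n + 1 := Nat.succ_pos n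
  have hcyc := cyc_eq_pathL k hr v
  have hlen : (List.ofFn v).length = n + 1 := List.length_ofFn
  obtain ⟨c, p, T, hL⟩ : ∃ c p T, List.ofFn v = c :: p :: T := by
    cases hL0 : List.ofFn v with
    | nil => rw [hL0] at hlen; simp at hlen
    | cons c rest =>
      cases rest with
      | nil => rw [hL0] at hlen; simp at hlen; omega
      | cons p T => exact ⟨c, p, T, rfl⟩
  have hofn : List.ofFn v = v 0 :: List.ofFn (fun t : Fin n => v t.succ) := List.ofFn_succ
  have h00 : v ⟨0, hr⟩ = v 0 := by congr 1
  have hv0 : v 0 = c := by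
    have h1 : v 0 :: List.ofFn (fun t : Fin n => v t.succ) = c :: p :: T :=
      hofn.symm.trans hL
    exact (List.cons.injEq _ _ _ _ ▸ h1 : _ ∧ _).1
  have hceq : cyc k v = x k c p * pathL k (p :: (T ++ [c])) := by
    rw [hcyc, h00, hv0, hL]; rfl
  have hQperm : (p :: (T ++ [c])).Perm (List.ofFn v) := by
    rw [hL]
    exact ((List.perm_append_singleton c T).cons p).trans (List.Perm.swap c p T)
  have hQnd : (p :: (T ++ [c])).Nodup := hQperm.nodup_iff.mpr (List.nodup_ofFn.mpr hv)
  have hiQ : i ∉ (p :: (T ++ [c])) := fun h => hi (hQperm.mem_iff.mp h)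
  have hjQ : j ∉ (p :: (T ++ [c])) := fun h => hj (hQperm.mem_iff.mp h)
  have hcmem : c ∈ List.ofFn v := by rw [hL]; simp
  have hpmem : p ∈ List.ofFn v := by rw [hL]; simp
  have hic : i ≠ c := fun h => hi (h ▸ hcmem)
  have hip : i ≠ p := fun h => hi (h ▸ hpmem)
  have hjc : j ≠ c := fun h => hj (h ▸ hcmem)
  have hjp : j ≠ p := fun h => hj (h ▸ hpmem)
  have hcp : c ≠ p := by
    have hndL : (c :: p :: T).Nodup := hL ▸ List.nodup_ofFn.mpr hv
    simp only [List.nodup_cons, List.mem_cons, not_or] at hndL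
    exact hndL.1.1
  have h2 : pathL k (j :: ((p :: (T ++ [c])) ++ [i]))
      = x k j p * (pathL k (p :: (T ++ [c])) * x k c i) := by
    rw [show (j :: ((p :: (T ++ [c])) ++ [i])) = ((j :: p :: T) ++ [c, i]) from by simp,
      pathL_snoc2,
      show ((j :: p :: T) ++ [c]) = (j :: p :: (T ++ [c])) from by simp,
      pathL_cons_cons, mul_assoc]
  have h3 : pathL k (i :: ((p :: (T ++ [c])) ++ [j]))
      = x k i p * (pathL k (p :: (T ++ [c])) * x k c j) := by
    rw [show (i :: ((p :: (T ++ [c])) ++ [j])) = ((i :: p :: T) ++ [c, j]) from by simp,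
      pathL_snoc2,
      show ((i :: p :: T) ++ [c]) = (i :: p :: (T ++ [c])) from by simp,
      pathL_cons_cons, mul_assoc]
  rw [← Ideal.Quotient.eq_zero_iff_mem]
  have hpl : Ideal.Quotient.mk (In k n) (x k i j * x k c p) =
      Ideal.Quotient.mk (In k n) (x k i c * x k j p + x k i p * x k j c) := by
    apply eq_of_add_mem
    rw [show x k i j * x k c p + (x k i c * x k j p + x k i p * x k j c)
        = pluck k i j c p from by rw [pluck]; ring]
    exact pluck_mem k n hij hic hip hjc hjp hcp
  calc Ideal.Quotient.mk (In k n) (x k i j * cyc k v)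
      = Ideal.Quotient.mk (In k n) ((x k i j * x k c p) * pathL k (p :: (T ++ [c]))) := by
        rw [hceq, ← mul_assoc]
    _ = Ideal.Quotient.mk (In k n) (x k i c * x k j p + x k i p * x k j c) *
        Ideal.Quotient.mk (In k n) (pathL k (p :: (T ++ [c]))) := by
        rw [map_mul, hpl]
    _ = Ideal.Quotient.mk (In k n) ((x k i c * x k j p) * pathL k (p :: (T ++ [c]))) +
        Ideal.Quotient.mk (In k n) ((x k i p * x k j c) * pathL k (p :: (T ++ [c]))) := by
        rw [← map_mul, add_mul, map_add]
    _ = Ideal.Quotient.mk (In k n) (pathL k (j :: ((p :: (T ++ [c])) ++ [i]))) +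
        Ideal.Quotient.mk (In k n) (pathL k (i :: ((p :: (T ++ [c])) ++ [j]))) := by
        rw [h2, h3]
        congr 1
        · congr 1
          rw [x_comm' k i c]; ring
        · congr 1
          rw [x_comm' k c j]; ring
    _ = 0 := by
        rw [← endswap k n (p :: (T ++ [c])) i j hiQ hjQ hij hQnd,
          ← map_add, add_self_zero, map_zero]

lemma key (n : ℕ) (hn : 2 ≤ n) (i j : ℕ) (hij : i ≠ j) (v : Fin (n+1) → ℕ)
    (hv : Function.Injective v) : x k i j * cyc k v ∈ In k n := by
  by_cases hi : i ∈ List.ofFn v <;> by_cases hj : j ∈ List.ofFn v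
  · exact case_both k n hn i j hij v hv hi hj
  · rw [x_comm' k i j]
    exact case_onein k n hn j i hij.symm v hv hj hi
  · exact case_onein k n hn i j hij v hv hi hj
  · exact case_fresh k n hn i j hij v hv hi hj
lemma gen_case (n : ℕ) (hn : 2 ≤ n) (w : V) (g : Rr k)
    (hg : g ∈ ({p | ∃ a b c d : ℕ, a ≠ b ∧ a ≠ c ∧ a ≠ d ∧ b ≠ c ∧ b ≠ d ∧ c ≠ d ∧
        p = pluck k a b c d} ∪
      {p | ∃ r : ℕ, 3 ≤ r ∧ r ≤ n + 1 ∧ ∃ v : Fin r → ℕ, Function.Injective v ∧ p = cyc k v} :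
        Set (Rr k))) :
    (Ideal.Quotient.mk (sqIdealS k) (X w)) * g ∈ In k n := by
  obtain ⟨sij, hsd⟩ := w
  induction sij using Sym2.ind with
  | _ i j =>
    have hij : i ≠ j := by rwa [Sym2.mk_isDiag_iff] at hsd
    have hxw : Ideal.Quotient.mk (sqIdealS k) (X (⟨s(i, j), hsd⟩ : V)) = x k i j := by
      rw [x, xS, dif_neg hij]
    rw [hxw]
    rcases hg with ⟨a, b, c, d, hab, hac, had, hbc, hbd, hcd, rfl⟩ | ⟨r, h3, hr, v, hv, rfl⟩
    · exact Ideal.mul_mem_left _ _ (pluck_mem k n hab hac had hbc hbd hcd)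
    · rcases Nat.lt_or_ge r (n + 1) with hlt | hge
      · exact Ideal.mul_mem_left _ _
          (Ideal.subset_span (Or.inr ⟨r, h3, by omega, v, hv, rfl⟩))
      · have : r = n + 1 := by omega
        subst this
        exact key k n hn i j hij v hv
end
set_option synthInstance.maxHeartbeats 1000000 in
/-- For every `n ≥ 2`, `m · I_{n+1} ⊆ I_n`, where `m` is the maximal homogeneous ideal
generated by all the variables. -/
theorem statement_14 [CharP k 2] (n : ℕ) (hn : 2 ≤ n) :
    mIdeal k * In k (n + 1) ≤ In k n := by
  suffices H : ∀ s ∈ In k (n + 1), ∀ r ∈ mIdeal k, r * s ∈ In k n by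
    exact Ideal.mul_le.mpr fun r hr s hs => H s hs r hr
  intro s hs
  induction hs using Submodule.span_induction with
  | mem g hg =>
    intro r hr
    induction hr using Submodule.span_induction with
    | mem rr hrr =>
      obtain ⟨w, rfl⟩ := hrr
      exact gen_case k n hn w g hg
    | zero => rw [zero_mul]; exact zero_mem _
    | add a b _ _ iha ihb => rw [add_mul]; exact add_mem iha ihb
    | smul c a _ iha =>
      rw [smul_eq_mul, mul_assoc]
      exact Ideal.mul_mem_left _ _ iha
  | zero => intro r _; rw [mul_zero]; exact zero_mem _
  | add s₁ s₂ _ _ ih1 ih2 =>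
    intro r hr
    rw [mul_add]
    exact add_mem (ih1 r hr) (ih2 r hr)
  | smul c s₁ _ ih =>
    intro r hr
    rw [smul_eq_mul, mul_left_comm]
    exact Ideal.mul_mem_left _ _ (ih r hr)
end
end

section
/- Let k be a field of characteristic 2 and φ: R → Λ[x_1,x_2,...,y_1,y_2,...] the algebra map x_{i,j} ↦ x_i y_j + x_j y_i from R = k[x_{i,j}]/(x_{i,j}²) to the exterior algebra. Then the union I_∞ = ⋃_{n≥2} I_n is contained in ker(φ), where I_n is generated by the Plücker elements and cycle monomials of length 3,...,n. -/
open MvPolynomial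

noncomputable section

variable (k : Type) [Field k]

open ExteriorAlgebra

/-- The exterior algebra on the variables `x_1, x_2, ..., y_1, y_2, ...`. -/
abbrev Lam : Type := ExteriorAlgebra k ((ℕ ⊕ ℕ) →₀ k)

/-- The generator `x_i` of the exterior algebra. -/
def xg (i : ℕ) : Lam k := ι k (Finsupp.single (Sum.inl i) 1)

/-- The generator `y_i` of the exterior algebra. -/
def yg (i : ℕ) : Lam k := ι k (Finsupp.single (Sum.inr i) 1)

/-- The image `x_i y_j + x_j y_i` of the variable `x_{i,j}`. -/
def phiVal (i j : ℕ) : Lam k := xg k i * yg k j + xg k j * yg k i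

lemma phiVal_comm (i j : ℕ) : phiVal k i j = phiVal k j i := add_comm _ _

lemma iota_prod_sq_zero (u v : (ℕ ⊕ ℕ) →₀ k) :
    (ι k u * ι k v) * (ι k u * ι k v) = 0 := by
  have h : ι k v * ι k u = -(ι k u * ι k v) :=
    eq_neg_of_add_eq_zero_left (by rw [add_comm]; exact ι_add_mul_swap u v)
  have e : (ι k u * ι k v) * (ι k u * ι k v)
      = ι k u * (ι k v * ι k u) * ι k v := by noncomm_ring
  rw [e, h]
  have e2 : ι k u * -(ι k u * ι k v) * ι k v
      = -((ι k u * ι k u) * (ι k v * ι k v)) := by noncomm_ring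
  rw [e2, ι_sq_zero, zero_mul, neg_zero]

section CharTwo
variable [CharP k 2]

instance : CharP (Lam k) 2 :=
  charP_of_injective_algebraMap (ExteriorAlgebra.algebraMap_leftInverse _).injective 2

lemma iota_comm (u v : (ℕ ⊕ ℕ) →₀ k) : ι k u * ι k v = ι k v * ι k u := by
  have h : ι k u * ι k v = -(ι k v * ι k u) :=
    eq_neg_of_add_eq_zero_left (ι_add_mul_swap u v)
  rw [h, CharTwo.neg_eq]

lemma phiVal_sq (i j : ℕ) : phiVal k i j * phiVal k i j = 0 := by
  have hc : ∀ u v : (ℕ ⊕ ℕ) →₀ k, Commute (ι k u) (ι k v) := fun u v => iota_comm k u v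
  have hab : Commute (xg k i * yg k j) (xg k j * yg k i) :=
    ((hc _ _).mul_right (hc _ _)).mul_left ((hc _ _).mul_right (hc _ _))
  unfold phiVal
  unfold xg yg at hab ⊢
  rw [add_mul, mul_add, mul_add, iota_prod_sq_zero, iota_prod_sq_zero, hab.eq]
  rw [zero_add, add_zero, CharTwo.add_self_eq_zero]

lemma phiVal_commute (i j a b : ℕ) :
    Commute (phiVal k i j) (phiVal k a b) := by
  have hc : ∀ u v : (ℕ ⊕ ℕ) →₀ k, Commute (ι k u) (ι k v) := fun u v => iota_comm k u v
  have hm : ∀ i j a b : ℕ, Commute (xg k i * yg k j) (xg k a * yg k b) := fun i j a b =>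
    ((hc _ _).mul_right (hc _ _)).mul_left ((hc _ _).mul_right (hc _ _))
  exact ((hm _ _ _ _).add_right (hm _ _ _ _)).add_left ((hm _ _ _ _).add_right (hm _ _ _ _))

/-- The (commutative) subalgebra of the exterior algebra generated by the
elements `x_i y_j + x_j y_i`. -/
def CommLam : Subalgebra k (Lam k) :=
  Algebra.adjoin k (Set.range fun p : ℕ × ℕ => phiVal k p.1 p.2)

noncomputable instance : CommSemiring (CommLam k) :=
  { (CommLam k).toSemiring with
    mul_comm := (Algebra.isMulCommutative_adjoin k (by
      rintro _ ⟨⟨i, j⟩, rfl⟩ _ ⟨⟨a, b⟩, rfl⟩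
      exact (phiVal_commute k i j a b).eq)).is_comm.comm }

/-- The substitution homomorphism `S → Λ`, `x_{i,j} ↦ x_i y_j + x_j y_i`. -/
def phiS : MvPolynomial V k →ₐ[k] Lam k :=
  (CommLam k).val.comp <| aeval fun v : V =>
    Sym2.lift
      ⟨fun i j => (⟨phiVal k i j, Algebra.subset_adjoin ⟨(i, j), rfl⟩⟩ : CommLam k),
       fun i j => Subtype.ext (phiVal_comm k i j)⟩ v.1

lemma phiS_X (i j : ℕ) (h : ¬ (s(i,j) : Sym2 ℕ).IsDiag) :
    phiS k (X (⟨s(i,j), h⟩ : V)) = phiVal k i j := by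
  simp [phiS, aeval_X]

lemma phiS_maps_sq : ∀ p ∈ sqIdealS k, phiS k p = 0 := by
  intro p hp
  have : sqIdealS k ≤ RingHom.ker (phiS k).toRingHom := by
    rw [sqIdealS, Ideal.span_le]
    rintro q ⟨v, rfl⟩
    obtain ⟨s, hs⟩ := v
    induction s using Sym2.ind with
    | _ i j =>
      show phiS k ((X ⟨s(i,j), hs⟩ : MvPolynomial V k) ^ 2) = 0
      rw [map_pow, phiS_X, sq, phiVal_sq]
  exact this hp

/-- The well-defined map `φ : R → Λ`, `x_{i,j} ↦ x_i y_j + x_j y_i`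
(in characteristic two the squares of the variables map to zero). -/
def phiR : Rr k →ₐ[k] Lam k :=
  Ideal.Quotient.liftₐ (sqIdealS k) (phiS k) (phiS_maps_sq k)

end CharTwo

section Aux
set_option linter.unusedSectionVars false
variable [CharP k 2]

lemma lam_commute (a b : Lam k) : Commute a b := by
  have hι : ∀ a : Lam k, ∀ u, Commute (ι k u) a := by
    intro a u
    induction a using ExteriorAlgebra.induction with
    | algebraMap r => exact (Algebra.commutes r (ι k u)).symm
    | ι v => exact iota_comm k u v
    | mul x y hx hy => exact hx.mul_right hy
    | add x y hx hy => exact hx.add_right hy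
  induction a using ExteriorAlgebra.induction with
  | algebraMap r => exact Algebra.commutes r b
  | ι u => exact hι b u
  | mul x y hx hy => exact hx.mul_left hy
  | add x y hx hy => exact hx.add_left hy

@[reducible] noncomputable def lamCommRing : CommRing (Lam k) :=
  { (inferInstance : Ring (Lam k)) with mul_comm := fun a b => (lam_commute k a b).eq }

attribute [local instance] lamCommRing

lemma xg_sq (i : ℕ) : xg k i * xg k i = 0 := by
  unfold xg; exact ι_sq_zero _

lemma yg_sq (i : ℕ) : yg k i * yg k i = 0 := by
  unfold yg; exact ι_sq_zero _

lemma phiVal_self (i : ℕ) : phiVal k i i = 0 := by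
  unfold phiVal; exact CharTwo.add_self_eq_zero _

lemma phiR_x (i j : ℕ) : phiR k (x k i j) = phiVal k i j := by
  show phiS k (xS k i j) = phiVal k i j
  unfold xS
  rcases eq_or_ne i j with h | h
  · subst h; rw [dif_pos rfl, map_zero, phiVal_self]
  · rw [dif_neg h, phiS_X]

lemma phiVal_step (i j l : ℕ) :
    phiVal k i j * phiVal k j l = (xg k j * yg k j) * phiVal k i l := by
  letI := lamCommRing k
  have key : phiVal k i j * phiVal k j l =
      (xg k j * yg k j) * phiVal k i l
      + (xg k i * xg k l) * (yg k j * yg k j)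
      + (xg k j * xg k j) * (yg k i * yg k l) := by
    unfold phiVal; ring
  rw [key, xg_sq, yg_sq, mul_zero, zero_mul, add_zero, add_zero]

lemma phiR_pluck (a b c d : ℕ) : phiR k (pluck k a b c d) = 0 := by
  letI := lamCommRing k
  have h2 : (2 : Lam k) = 0 := by
    have := CharP.cast_eq_zero (Lam k) 2
    simpa using this
  rw [pluck, map_add, map_add, map_mul, map_mul, map_mul,
    phiR_x, phiR_x, phiR_x, phiR_x, phiR_x, phiR_x]
  have key : phiVal k a b * phiVal k c d + phiVal k a c * phiVal k b d
      + phiVal k a d * phiVal k b c =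
      2 * (xg k a * xg k c * yg k b * yg k d
        + xg k a * xg k d * yg k b * yg k c
        + xg k b * xg k c * yg k a * yg k d
        + xg k b * xg k d * yg k a * yg k c
        + xg k a * xg k b * yg k c * yg k d
        + xg k c * xg k d * yg k a * yg k b) := by
    unfold phiVal; ring
  rw [key, h2, zero_mul]

lemma telescope (w : ℕ → ℕ) (n : ℕ) (hn : 1 ≤ n) :
    ∏ t ∈ Finset.range n, phiVal k (w t) (w (t + 1)) =
      (∏ t ∈ Finset.range (n - 1), (xg k (w (t + 1)) * yg k (w (t + 1))))
        * phiVal k (w 0) (w n) := by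
  letI := lamCommRing k
  induction n, hn using Nat.le_induction with
  | base => simp
  | succ n hn ih =>
    rw [Finset.prod_range_succ, ih]
    have hn1 : n + 1 - 1 = (n - 1) + 1 := by omega
    rw [hn1, Finset.prod_range_succ]
    have hw : n - 1 + 1 = n := by omega
    rw [hw]
    rw [mul_assoc, phiVal_step]
    ring

lemma phiR_cyc {r : ℕ} (hr : 1 ≤ r) (v : Fin r → ℕ) : phiR k (cyc k v) = 0 := by
  letI := lamCommRing k
  have hr0 : 0 < r := hr
  set w : ℕ → ℕ := fun t => v ⟨t % r, Nat.mod_lt _ hr0⟩ with hw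
  rw [cyc, map_prod]
  have step : ∀ t : Fin r,
      phiR k (x k (v t) (v ⟨(t.val + 1) % r,
        Nat.mod_lt _ (Nat.lt_of_le_of_lt (Nat.zero_le _) t.2)⟩)) =
      phiVal k (w t.val) (w (t.val + 1)) := by
    intro t
    rw [phiR_x]
    congr 2 <;> simp [hw, Nat.mod_eq_of_lt t.2, Nat.mod_mod_of_dvd]
  rw [Finset.prod_congr rfl (fun t _ => step t)]
  rw [Fin.prod_univ_eq_prod_range (fun t => phiVal k (w t) (w (t + 1))) r]
  rw [telescope k w r hr]
  have : w r = w 0 := by simp [hw]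
  rw [this, phiVal_self, mul_zero]

end Aux

/-- The union `I_∞ = ⋃_{n ≥ 2} I_n` is contained in the kernel of
`φ : R → Λ`, `x_{i,j} ↦ x_i y_j + x_j y_i`. -/

theorem statement_16 [CharP k 2] :
    ∀ n : ℕ, 2 ≤ n → ∀ p ∈ In k n, phiR k p = 0 := by
  intro n _ p hp
  have h : In k n ≤ RingHom.ker (phiR k).toRingHom := by
    rw [In, Ideal.span_le]
    rintro q (⟨a, b, c, d, -, -, -, -, -, -, rfl⟩ | ⟨r, hr3, -, v, -, rfl⟩)
    · exact phiR_pluck k a b c d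
    · exact phiR_cyc k (by omega) v
  exact h hp

end
end

section
/- Let k be a field of characteristic 2. In R = k[x_{i,j}]/(x_{i,j}²), the GL-stable ideal generated by the single element w_{n+1}·x_{n+2,n+3} (an (n+1)-cycle monomial times a variable with fresh indices) equals m·J, where J is the GL-stable ideal generated by w_{n+1} and m is the maximal ideal of variables. -/
open MvPolynomial

noncomputable section

variable (k : Type) [Field k]

/-! ### Auxiliary machinery -/

section Aux

variable [CharP k 2]

lemma glR_mk (g : (ℕ →₀ k) →ₗ[k] (ℕ →₀ k)) (p : MvPolynomial V k) :
    glR k g (Ideal.Quotient.mk _ p) = Ideal.Quotient.mk _ (glS k g p) := rfl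

lemma glS_xS (g : (ℕ →₀ k) →ₗ[k] (ℕ →₀ k)) {i j : ℕ} (h : i ≠ j) :
    glS k g (xS k i j) = glXS k g i j := by
  rw [xS, dif_neg h, glS, aeval_X]
  exact Sym2.lift_mk _ i j

lemma glR_x (g : (ℕ →₀ k) →ₗ[k] (ℕ →₀ k)) {i j : ℕ} (h : i ≠ j) :
    glR k g (x k i j) = Ideal.Quotient.mk _ (glXS k g i j) := by
  rw [x, glR_mk, glS_xS k g h]

lemma glXS_congr {g h : (ℕ →₀ k) →ₗ[k] (ℕ →₀ k)} {i j : ℕ}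
    (h1 : col k h i = col k g i) (h2 : col k h j = col k g j) :
    glXS k h i j = glXS k g i j := by
  unfold glXS
  rw [h1, h2]

lemma glR_x_congr {g h : (ℕ →₀ k) →ₗ[k] (ℕ →₀ k)} (i j : ℕ)
    (h1 : col k h i = col k g i) (h2 : col k h j = col k g j) :
    glR k h (x k i j) = glR k g (x k i j) := by
  rcases eq_or_ne i j with rfl | hij
  · have hz : x k i i = 0 := by rw [x, xS, dif_pos rfl, map_zero]
    rw [hz, map_zero, map_zero]
  · rw [glR_x k h hij, glR_x k g hij, glXS_congr k h1 h2]

lemma glR_w_congr {g h : (ℕ →₀ k) →ₗ[k] (ℕ →₀ k)} (n : ℕ)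
    (hcol : ∀ i : ℕ, i ≤ n + 1 → col k h i = col k g i) :
    glR k h (w k (n + 1)) = glR k g (w k (n + 1)) := by
  unfold w cyc
  rw [map_prod, map_prod]
  refine Finset.prod_congr rfl fun t _ => ?_
  refine glR_x_congr k _ _ (hcol _ ?_) (hcol _ ?_)
  · exact t.2
  · exact Nat.mod_lt _ (Nat.succ_pos n)

/-- The transvection `e_q ↦ e_q + e_p` (fixing the other basis vectors). -/
def tv (p q : ℕ) : (ℕ →₀ k) →ₗ[k] (ℕ →₀ k) :=
  LinearMap.id + (Finsupp.lapply q).smulRight (Finsupp.single p 1)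

lemma tv_apply (p q : ℕ) (f : ℕ →₀ k) : tv k p q f = f + f q • Finsupp.single p 1 := rfl

lemma tv_fix (p q : ℕ) (f : ℕ →₀ k) (h : f q = 0) : tv k p q f = f := by
  rw [tv_apply, h, zero_smul, add_zero]

lemma tv_invol (p q : ℕ) (hpq : p ≠ q) : Function.Involutive (tv k p q) := by
  intro f
  have h1 : (tv k p q f) q = f q := by
    simp [tv_apply, Finsupp.single_apply, hpq]
  rw [tv_apply (f := tv k p q f), h1, tv_apply, add_assoc, ← add_smul,
    CharTwo.add_self_eq_zero (f q), zero_smul, add_zero]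

/-- The transvection as a linear automorphism (in characteristic two it is an involution). -/
def tvE (p q : ℕ) (hpq : p ≠ q) : (ℕ →₀ k) ≃ₗ[k] (ℕ →₀ k) :=
  LinearEquiv.ofInvolutive (tv k p q) (tv_invol k p q hpq)

lemma tvE_apply (p q : ℕ) (hpq : p ≠ q) (f : ℕ →₀ k) : tvE k p q hpq f = tv k p q f := rfl

lemma isGL_tvE (p q : ℕ) (hpq : p ≠ q) : IsGL k (tvE k p q hpq) := by
  apply Set.Finite.subset (Set.finite_singleton q)
  intro i hi
  by_contra hne
  apply hi
  show tv k p q (Finsupp.single i 1) = _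
  apply tv_fix
  rw [Finsupp.single_apply, if_neg (fun h => hne (by simp [h]))]

/-- The linear automorphism induced by a permutation of the basis. -/
def permE (e : Equiv.Perm ℕ) : (ℕ →₀ k) ≃ₗ[k] (ℕ →₀ k) := Finsupp.domLCongr e

lemma permE_single (e : Equiv.Perm ℕ) (i : ℕ) :
    permE k e (Finsupp.single i 1) = Finsupp.single (e i) 1 :=
  Finsupp.domLCongr_single e i 1

lemma isGL_permE (e : Equiv.Perm ℕ) (s : Set ℕ) (hs : s.Finite)
    (he : ∀ i ∉ s, e i = i) : IsGL k (permE k e) := by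
  apply hs.subset
  intro i hi
  by_contra hns
  exact hi (by rw [permE_single, he i hns])

lemma isGL_trans (e₁ e₂ : (ℕ →₀ k) ≃ₗ[k] (ℕ →₀ k)) (h1 : IsGL k e₁) (h2 : IsGL k e₂) :
    IsGL k (e₁.trans e₂) := by
  apply (h1.union h2).subset
  intro i hi
  by_contra hns
  simp only [Set.mem_union, Set.mem_setOf_eq, not_or, not_not] at hns
  exact hi (by rw [LinearEquiv.trans_apply, hns.1, hns.2])

lemma col_trans (e₁ e₂ : (ℕ →₀ k) ≃ₗ[k] (ℕ →₀ k)) (i : ℕ) :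
    col k (e₁.trans e₂).toLinearMap i = e₂ (col k e₁.toLinearMap i) := rfl

lemma glXS_eq_sum (g : (ℕ →₀ k) →ₗ[k] (ℕ →₀ k)) (i j : ℕ) (A B : Finset ℕ)
    (hA : (col k g i).support ⊆ A) (hB : (col k g j).support ⊆ B) :
    glXS k g i j = ∑ a ∈ A, ∑ b ∈ B, (col k g i a * col k g j b) • xS k a b := by
  have step1 : ∀ a : ℕ, ∑ b ∈ (col k g j).support, (col k g i a * col k g j b) • xS k a b
      = ∑ b ∈ B, (col k g i a * col k g j b) • xS k a b := fun a =>
    Finset.sum_subset hB fun b _ hb => by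
      rw [Finsupp.notMem_support_iff.mp hb, mul_zero, zero_smul]
  unfold glXS
  simp_rw [step1]
  exact Finset.sum_subset hA fun a _ ha => Finset.sum_eq_zero fun b _ => by
    rw [Finsupp.notMem_support_iff.mp ha, zero_mul, zero_smul]

lemma pair_support (P A : ℕ) (c : k) :
    (Finsupp.single P (1 : k) + c • Finsupp.single A 1).support ⊆ {A, P} := by
  refine Finsupp.support_add.trans (Finset.union_subset ?_ ?_)
  · exact Finsupp.support_single_subset.trans (by intro z hz; simp at hz; simp [hz])
  · exact Finsupp.support_smul.trans
      (Finsupp.support_single_subset.trans (by intro z hz; simp at hz; simp [hz]))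

lemma glXS_formula (g : (ℕ →₀ k) →ₗ[k] (ℕ →₀ k)) {i j : ℕ} {P A Q B : ℕ} (cA cB : k)
    (hPA : P ≠ A) (hQB : Q ≠ B) (hAQ : A ≠ Q) (hAB : A ≠ B) (hPQ : P ≠ Q) (hPB : P ≠ B)
    (hi : col k g i = Finsupp.single P 1 + cA • Finsupp.single A 1)
    (hj : col k g j = Finsupp.single Q 1 + cB • Finsupp.single B 1) :
    glXS k g i j =
      (cA * cB) • xS k A B + cA • xS k A Q + cB • xS k P B + xS k P Q := by
  rw [glXS_eq_sum k g i j {A, P} {B, Q}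
    (by rw [hi]; exact pair_support k P A cA) (by rw [hj]; exact pair_support k Q B cB)]
  simp only [Finset.sum_pair (Ne.symm hPA), Finset.sum_pair (Ne.symm hQB)]
  rw [hi, hj]
  simp only [Finsupp.add_apply, Finsupp.smul_apply, Finsupp.single_apply, smul_eq_mul]
  simp only [if_pos rfl, if_neg hPA, if_neg hQB, if_neg (Ne.symm hPA), if_neg (Ne.symm hQB),
    mul_one, mul_zero, zero_add, add_zero, one_mul]
  simp only [if_true]
  simp only [smul_eq_C_mul]
  simp only [mul_one, one_mul, map_one, add_assoc]

set_option maxHeartbeats 1000000 in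
set_option synthInstance.maxHeartbeats 1000000 in
lemma key_mem (n : ℕ) (a b : ℕ) (hab : a ≠ b)
    (g : (ℕ →₀ k) ≃ₗ[k] (ℕ →₀ k)) (hg : IsGL k g) :
    x k a b * glR k g.toLinearMap (w k (n + 1)) ∈
      glIdeal k (w k (n + 1) * x k (n + 2) (n + 3)) := by
  classical
  set G := g.toLinearMap with hG
  -- choose a fresh index M
  set B₀ : Finset ℕ := ((Finset.range (n + 4) ∪ {a, b}) ∪ hg.toFinset) ∪
    (Finset.range (n + 2)).biUnion (fun i => (col k G i).support) with hB₀
  set M : ℕ := B₀.sup id + 1 with hMdef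
  have hmem₀ : ∀ m ∈ B₀, m < M := fun m hm =>
    Nat.lt_succ_of_le (Finset.le_sup (f := id) hm)
  have haM : a < M := hmem₀ a (by simp [hB₀])
  have hbM : b < M := hmem₀ b (by simp [hB₀])
  have hnM : n + 3 < M := hmem₀ _ (by simp [hB₀])
  have hgfix : ∀ m : ℕ, m ∉ B₀ → g (Finsupp.single m 1) = Finsupp.single m 1 := by
    intro m hm
    by_contra hne
    exact hm (by simp [hB₀, Set.Finite.mem_toFinset, IsGL]; exact Or.inr (Or.inr (Or.inr (Or.inl ((Set.Finite.mem_toFinset (s := {i : ℕ | g (Finsupp.single i 1) ≠ Finsupp.single i 1}) hg).mpr hne)))))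
  have hMnot : M ∉ B₀ := fun h => absurd (hmem₀ M h) (lt_irrefl M)
  have hM1not : M + 1 ∉ B₀ := fun h => by have := hmem₀ _ h; omega
  have hgM : g (Finsupp.single M 1) = Finsupp.single M 1 := hgfix M hMnot
  have hgM1 : g (Finsupp.single (M + 1) 1) = Finsupp.single (M + 1) 1 := hgfix _ hM1not
  have hcolval : ∀ i : ℕ, i ≤ n + 1 → (col k G i) M = 0 ∧ (col k G i) (M + 1) = 0 := by
    intro i hi
    have hsup : ∀ m : ℕ, (col k G i) m ≠ 0 → m < M := fun m hne =>
      hmem₀ _ (Finset.mem_union_right _ (Finset.mem_biUnion.mpr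
        ⟨i, Finset.mem_range.mpr (by omega), Finsupp.mem_support_iff.mpr hne⟩))
    constructor
    · by_contra hne; exact absurd (hsup M hne) (by omega)
    · by_contra hne; exact absurd (hsup (M + 1) hne) (by omega)
  -- the permutation sending n+2 ↦ M, n+3 ↦ M+1
  set σp : Equiv.Perm ℕ := (Equiv.swap (n + 2) M).trans (Equiv.swap (n + 3) (M + 1)) with hσp
  have hσ_low : ∀ i : ℕ, i ≤ n + 1 → σp i = i := by
    intro i hi
    rw [hσp, Equiv.trans_apply,
      Equiv.swap_apply_of_ne_of_ne (show i ≠ n + 2 by omega) (show i ≠ M by omega),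
      Equiv.swap_apply_of_ne_of_ne (show i ≠ n + 3 by omega) (show i ≠ M + 1 by omega)]
  have hσ2 : σp (n + 2) = M := by
    rw [hσp, Equiv.trans_apply, Equiv.swap_apply_left,
      Equiv.swap_apply_of_ne_of_ne (show M ≠ n + 3 by omega) (show M ≠ M + 1 by omega)]
  have hσ3 : σp (n + 3) = M + 1 := by
    rw [hσp, Equiv.trans_apply,
      Equiv.swap_apply_of_ne_of_ne (show n + 3 ≠ n + 2 by omega) (show n + 3 ≠ M by omega),
      Equiv.swap_apply_left]
  set base : (ℕ →₀ k) ≃ₗ[k] (ℕ →₀ k) := (permE k σp).trans g with hbase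
  have colbase_eq : ∀ i : ℕ, col k base.toLinearMap i = g (Finsupp.single (σp i) 1) := by
    intro i
    rw [hbase, col_trans]
    show g (permE k σp (Finsupp.single i 1)) = _
    rw [permE_single]
  have colbase_low : ∀ i : ℕ, i ≤ n + 1 → col k base.toLinearMap i = col k G i := by
    intro i hi
    rw [colbase_eq, hσ_low i hi]; rfl
  have colbase2 : col k base.toLinearMap (n + 2) = Finsupp.single M 1 := by
    rw [colbase_eq, hσ2, hgM]
  have colbase3 : col k base.toLinearMap (n + 3) = Finsupp.single (M + 1) 1 := by
    rw [colbase_eq, hσ3, hgM1]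
  have hGLbase : IsGL k base := by
    refine isGL_trans k _ _ (isGL_permE k σp {n + 2, n + 3, M, M + 1} (Set.toFinite _) ?_) hg
    intro i hi
    simp only [Set.mem_insert_iff, Set.mem_singleton_iff, not_or] at hi
    rw [hσp, Equiv.trans_apply, Equiv.swap_apply_of_ne_of_ne hi.1 hi.2.2.1,
      Equiv.swap_apply_of_ne_of_ne hi.2.1 hi.2.2.2]
  have haMne : a ≠ M := by omega
  have hbM1ne : b ≠ M + 1 := by omega
  set TA : (ℕ →₀ k) ≃ₗ[k] (ℕ →₀ k) := tvE k a M haMne with hTA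
  set TB : (ℕ →₀ k) ≃ₗ[k] (ℕ →₀ k) := tvE k b (M + 1) hbM1ne with hTB
  -- the four group elements
  set h₁ : (ℕ →₀ k) ≃ₗ[k] (ℕ →₀ k) := (base.trans TB).trans TA with hh₁
  set h₂ : (ℕ →₀ k) ≃ₗ[k] (ℕ →₀ k) := base.trans TB with hh₂
  set h₃ : (ℕ →₀ k) ≃ₗ[k] (ℕ →₀ k) := base.trans TA with hh₃
  have hGL₂ : IsGL k h₂ := isGL_trans k _ _ hGLbase (isGL_tvE k _ _ _)
  have hGL₃ : IsGL k h₃ := isGL_trans k _ _ hGLbase (isGL_tvE k _ _ _)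
  have hGL₁ : IsGL k h₁ := isGL_trans k _ _ (isGL_trans k _ _ hGLbase (isGL_tvE k _ _ _))
    (isGL_tvE k _ _ _)
  -- action of the transvections on the relevant columns
  have hTAfix : ∀ f : ℕ →₀ k, f M = 0 → TA f = f := fun f hf => by
    rw [hTA, tvE_apply, tv_fix k a M f hf]
  have hTBfix : ∀ f : ℕ →₀ k, f (M + 1) = 0 → TB f = f := fun f hf => by
    rw [hTB, tvE_apply, tv_fix k b (M + 1) f hf]
  have hsingleM : (Finsupp.single M (1:k)) (M + 1) = 0 := by
    rw [Finsupp.single_apply, if_neg (by omega)]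
  have hsingleM1 : (Finsupp.single (M + 1) (1:k)) M = 0 := by
    rw [Finsupp.single_apply, if_neg (by omega)]
  have hTAM : TA (Finsupp.single M 1) = Finsupp.single M 1 + (1:k) • Finsupp.single a 1 := by
    rw [hTA, tvE_apply, tv_apply, Finsupp.single_eq_same]
  have hTBM1 : TB (Finsupp.single (M + 1) 1)
      = Finsupp.single (M + 1) 1 + (1:k) • Finsupp.single b 1 := by
    rw [hTB, tvE_apply, tv_apply, Finsupp.single_eq_same]
  -- columns of the four group elements
  have col₁low : ∀ i : ℕ, i ≤ n + 1 → col k h₁.toLinearMap i = col k G i := fun i hi => by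
    rw [hh₁, col_trans, col_trans, colbase_low i hi, hTBfix _ (hcolval i hi).2,
      hTAfix _ (hcolval i hi).1]
  have col₂low : ∀ i : ℕ, i ≤ n + 1 → col k h₂.toLinearMap i = col k G i := fun i hi => by
    rw [hh₂, col_trans, colbase_low i hi, hTBfix _ (hcolval i hi).2]
  have col₃low : ∀ i : ℕ, i ≤ n + 1 → col k h₃.toLinearMap i = col k G i := fun i hi => by
    rw [hh₃, col_trans, colbase_low i hi, hTAfix _ (hcolval i hi).1]
  have col₁2 : col k h₁.toLinearMap (n + 2)
      = Finsupp.single M 1 + (1:k) • Finsupp.single a 1 := by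
    rw [hh₁, col_trans, col_trans, colbase2, hTBfix _ hsingleM, hTAM]
  have col₁3 : col k h₁.toLinearMap (n + 3)
      = Finsupp.single (M + 1) 1 + (1:k) • Finsupp.single b 1 := by
    rw [hh₁, col_trans, col_trans, colbase3, hTBM1, hTAfix]
    rw [Finsupp.add_apply, Finsupp.smul_apply, hsingleM1, Finsupp.single_apply,
      if_neg (by omega : ¬ b = M), smul_zero, add_zero]
  have col₂2 : col k h₂.toLinearMap (n + 2)
      = Finsupp.single M 1 + (0:k) • Finsupp.single a 1 := by
    rw [hh₂, col_trans, colbase2, hTBfix _ hsingleM, zero_smul, add_zero]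
  have col₂3 : col k h₂.toLinearMap (n + 3)
      = Finsupp.single (M + 1) 1 + (1:k) • Finsupp.single b 1 := by
    rw [hh₂, col_trans, colbase3, hTBM1]
  have col₃2 : col k h₃.toLinearMap (n + 2)
      = Finsupp.single M 1 + (1:k) • Finsupp.single a 1 := by
    rw [hh₃, col_trans, colbase2, hTAM]
  have col₃3 : col k h₃.toLinearMap (n + 3)
      = Finsupp.single (M + 1) 1 + (0:k) • Finsupp.single b 1 := by
    rw [hh₃, col_trans, colbase3, hTAfix _ hsingleM1, zero_smul, add_zero]
  have col₄2 : col k base.toLinearMap (n + 2)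
      = Finsupp.single M 1 + (0:k) • Finsupp.single a 1 := by
    rw [colbase2, zero_smul, add_zero]
  have col₄3 : col k base.toLinearMap (n + 3)
      = Finsupp.single (M + 1) 1 + (0:k) • Finsupp.single b 1 := by
    rw [colbase3, zero_smul, add_zero]
  -- the glXS values
  have hMa : M ≠ a := Ne.symm haMne
  have hM1b : M + 1 ≠ b := Ne.symm hbM1ne
  have haM1 : a ≠ M + 1 := by omega
  have hMM1 : M ≠ M + 1 := by omega
  have hMb : M ≠ b := by omega
  have e₁ := glXS_formula k h₁.toLinearMap (1:k) (1:k) hMa hM1b haM1 hab hMM1 hMb col₁2 col₁3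
  have e₂ := glXS_formula k h₂.toLinearMap (0:k) (1:k) hMa hM1b haM1 hab hMM1 hMb col₂2 col₂3
  have e₃ := glXS_formula k h₃.toLinearMap (1:k) (0:k) hMa hM1b haM1 hab hMM1 hMb col₃2 col₃3
  have e₄ := glXS_formula k base.toLinearMap (0:k) (0:k) hMa hM1b haM1 hab hMM1 hMb col₄2 col₄3
  -- sum of the four glXS values is xS a b (characteristic two)
  have hchar : ∀ p : MvPolynomial V k, p + p = 0 := CharTwo.add_self_eq_zero
  have hsum : glXS k h₁.toLinearMap (n + 2) (n + 3) + glXS k h₂.toLinearMap (n + 2) (n + 3)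
      + glXS k h₃.toLinearMap (n + 2) (n + 3) + glXS k base.toLinearMap (n + 2) (n + 3)
      = xS k a b := by
    rw [e₁, e₂, e₃, e₄]
    simp only [one_smul, zero_smul, one_mul, zero_mul, mul_one, mul_zero, add_zero, zero_add]
    have expand : ∀ p1 p2 p3 p4 : MvPolynomial V k,
        p1 + p2 + p3 + p4 + (p3 + p4) + (p2 + p4) + p4
          = p1 + ((p2 + p2) + ((p3 + p3) + ((p4 + p4) + (p4 + p4)))) := fun _ _ _ _ => by ring
    rw [expand, hchar, hchar, hchar]
    simp
  -- each glR hᵢ fixes glR g (w)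
  have hwcongr : ∀ (e : (ℕ →₀ k) ≃ₗ[k] (ℕ →₀ k)),
      (∀ i : ℕ, i ≤ n + 1 → col k e.toLinearMap i = col k G i) →
      glR k e.toLinearMap (w k (n + 1)) = glR k G (w k (n + 1)) :=
    fun e he => glR_w_congr k n he
  have hx23 : (n + 2 : ℕ) ≠ n + 3 := by omega
  have expandR : ∀ (e : (ℕ →₀ k) ≃ₗ[k] (ℕ →₀ k)),
      (∀ i : ℕ, i ≤ n + 1 → col k e.toLinearMap i = col k G i) →
      glR k e.toLinearMap (w k (n + 1) * x k (n + 2) (n + 3))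
        = glR k G (w k (n + 1)) * Ideal.Quotient.mk _ (glXS k e.toLinearMap (n + 2) (n + 3)) :=
    fun e he => by rw [map_mul, hwcongr e he, glR_x k _ hx23]
  have key_eq :
      glR k h₁.toLinearMap (w k (n + 1) * x k (n + 2) (n + 3))
      + glR k h₂.toLinearMap (w k (n + 1) * x k (n + 2) (n + 3))
      + glR k h₃.toLinearMap (w k (n + 1) * x k (n + 2) (n + 3))
      + glR k base.toLinearMap (w k (n + 1) * x k (n + 2) (n + 3))
      = x k a b * glR k G (w k (n + 1)) := by
    rw [expandR h₁ col₁low, expandR h₂ col₂low, expandR h₃ col₃low, expandR base colbase_low,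
      ← mul_add, ← mul_add, ← mul_add, ← map_add, ← map_add, ← map_add]
    rw [hsum, mul_comm]
    rfl
  rw [← key_eq]
  have hgen : ∀ (e : (ℕ →₀ k) ≃ₗ[k] (ℕ →₀ k)), IsGL k e →
      glR k e.toLinearMap (w k (n + 1) * x k (n + 2) (n + 3)) ∈
        glIdeal k (w k (n + 1) * x k (n + 2) (n + 3)) :=
    fun e he => Ideal.subset_span ⟨e, he, rfl⟩
  exact add_mem (add_mem (add_mem (hgen h₁ hGL₁) (hgen h₂ hGL₂)) (hgen h₃ hGL₃))
    (hgen base hGLbase)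

end Aux

set_option synthInstance.maxHeartbeats 1000000 in
/-- The `GL`-stable ideal generated by `w_{n+1} · x_{n+2,n+3}` equals `m · J`, where
`J` is the `GL`-stable ideal generated by `w_{n+1}` and `m` is the maximal ideal of
variables. -/
theorem statement_19 [CharP k 2] (n : ℕ) (hn : 2 ≤ n) :
    glIdeal k (w k (n + 1) * x k (n + 2) (n + 3)) = mIdeal k * glIdeal k (w k (n + 1)) := by
  apply le_antisymm
  · unfold glIdeal
    rw [Ideal.span_le]
    rintro p ⟨g, hg, rfl⟩
    rw [map_mul, mul_comm (glR k g.toLinearMap (w k (n + 1)))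
      (glR k g.toLinearMap (x k (n + 2) (n + 3)))]
    apply Ideal.mul_mem_mul
    · rw [glR_x k _ (show (n + 2 : ℕ) ≠ n + 3 by omega)]
      unfold glXS
      rw [map_sum]
      refine Ideal.sum_mem _ fun a _ => ?_
      rw [map_sum]
      refine Ideal.sum_mem _ fun b _ => ?_
      rcases eq_or_ne a b with rfl | hab2
      · rw [xS, dif_pos rfl, smul_zero, map_zero]
        exact zero_mem _
      · have hsm : (Ideal.Quotient.mk (sqIdealS k))
            ((col k g.toLinearMap (n + 2) a * col k g.toLinearMap (n + 3) b) • xS k a b)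
            = (col k g.toLinearMap (n + 2) a * col k g.toLinearMap (n + 3) b) •
              (Ideal.Quotient.mk (sqIdealS k)) (xS k a b) := by
          rw [← Ideal.Quotient.mkₐ_eq_mk (R₁ := k), map_smul]
        rw [hsm]
        refine Submodule.smul_of_tower_mem _ _ ?_
        rw [xS, dif_neg hab2]
        exact Ideal.subset_span ⟨_, rfl⟩
    · exact Ideal.subset_span ⟨g, hg, rfl⟩
  · unfold mIdeal glIdeal
    rw [Ideal.span_mul_span', Ideal.span_le]
    rintro p hp
    rw [Set.mem_mul] at hp
    obtain ⟨u, hu, q, ⟨g, hg, rfl⟩, rfl⟩ := hp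
    obtain ⟨v, rfl⟩ := hu
    obtain ⟨s, hs⟩ := v
    revert hs
    induction s using Sym2.ind with
    | _ i j =>
      intro hs
      have hij : i ≠ j := by rwa [Sym2.mk_isDiag_iff] at hs
      have hxv : Ideal.Quotient.mk (sqIdealS k) (X (⟨s(i, j), hs⟩ : V)) = x k i j := by
        rw [x, xS, dif_neg hij]
      show Ideal.Quotient.mk (sqIdealS k) (X (⟨s(i, j), hs⟩ : V))
        * glR k g.toLinearMap (w k (n + 1)) ∈ _
      rw [hxv]
      exact key_mem k n i j hij g hg

end
end
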